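/- Let X and Y be real random variables on a probability space such that the cumulative distribution functions of X and of X + Y are both continuous and strictly increasing on ℝ. Let α ∈ (0,1), ε ∈ (0, min{α, 1 − α}), and δ > 0 be such that P(|Y| > δ) < ε. Then VaR^{α−ε}(X) − δ ≤ VaR^α(X + Y) ≤ VaR^{α+ε}(X) + δ, where VaR^β(Z) := inf{t ∈ ℝ : P(Z ≤ t) ≥ β} for a real random variable Z and β ∈ (0,1). -/

import Mathlib

open MeasureTheory

/-- The value-at-risk at level `β` of a real random variable `Z` on `(Ω, 𝓕, P)`:
`VaR^β(Z) = inf {t : ℝ | P(Z ≤ t) ≥ β}`. -/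
noncomputable def VaR {Ω : Type*} [MeasurableSpace Ω]
    (β : ℝ) (P : Measure Ω) (Z : Ω → ℝ) : ℝ :=
  sInf {t : ℝ | β ≤ (P {ω | Z ω ≤ t}).toReal}


section Aux

open Filter Set

variable {Ω : Type*} [MeasurableSpace Ω] (P : Measure Ω) [IsProbabilityMeasure P]
  (Z : Ω → ℝ)

lemma cdf_mono : Monotone fun t => (P {ω | Z ω ≤ t}).toReal := fun a b hab => by
  apply ENNReal.toReal_mono (measure_ne_top _ _)
  exact measure_mono fun ω hω => le_trans hω hab

lemma cdf_tendsto_atTop (hZ : Measurable Z) :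
    Tendsto (fun t => (P {ω | Z ω ≤ t}).toReal) atTop (nhds 1) := by
  have h1 : Tendsto (fun t : ℝ => P {ω | Z ω ≤ t}) atTop (nhds (P univ)) := by
    have := tendsto_measure_Iic_atTop (P.map Z)
    have heq : ∀ t : ℝ, (P.map Z) (Iic t) = P {ω | Z ω ≤ t} := fun t => by
      rw [Measure.map_apply hZ measurableSet_Iic]; rfl
    have huniv : (P.map Z) univ = P univ := by
      rw [Measure.map_apply hZ MeasurableSet.univ]; simp
    simpa [heq, huniv] using this
  have h2 : Tendsto ENNReal.toReal (nhds (P univ)) (nhds (P univ).toReal) :=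
    ENNReal.tendsto_toReal (measure_ne_top _ _)
  have := h2.comp h1
  simpa [measure_univ, Function.comp_def] using this

lemma cdf_tendsto_atBot (hZ : Measurable Z) :
    Tendsto (fun t => (P {ω | Z ω ≤ t}).toReal) atBot (nhds 0) := by
  have h1 : Tendsto (fun t : ℝ => P {ω | Z ω ≤ t}) atBot (nhds 0) := by
    have hmeas : ∀ t : ℝ, NullMeasurableSet {ω | Z ω ≤ t} P :=
      fun t => (hZ measurableSet_Iic).nullMeasurableSet
    have hmono : Monotone fun t : ℝ => {ω | Z ω ≤ t} :=
      fun a b hab ω hω => le_trans hω hab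
    have hfin : ∃ t : ℝ, P {ω | Z ω ≤ t} ≠ ⊤ := ⟨0, measure_ne_top _ _⟩
    have := tendsto_measure_iInter_atBot hmeas hmono hfin
    have hempty : (⋂ t : ℝ, {ω | Z ω ≤ t}) = ∅ := by
      ext ω
      simp only [mem_iInter, mem_setOf_eq, mem_empty_iff_false, iff_false, not_forall]
      exact ⟨Z ω - 1, by linarith⟩
    simpa [hempty, Function.comp_def] using this
  have h2 : Tendsto ENNReal.toReal (nhds 0) (nhds ((0 : ENNReal).toReal)) :=
    ENNReal.tendsto_toReal (by simp)
  simpa [Function.comp_def] using h2.comp h1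

lemma VaR_set_nonempty (hZ : Measurable Z) {β : ℝ} (hβ : β < 1) :
    {t : ℝ | β ≤ (P {ω | Z ω ≤ t}).toReal}.Nonempty := by
  have := (cdf_tendsto_atTop P Z hZ).eventually (eventually_ge_nhds hβ)
  obtain ⟨t, ht⟩ := this.exists
  exact ⟨t, ht⟩

lemma VaR_set_bddBelow (hZ : Measurable Z) {β : ℝ} (hβ : 0 < β) :
    BddBelow {t : ℝ | β ≤ (P {ω | Z ω ≤ t}).toReal} := by
  have := (cdf_tendsto_atBot P Z hZ).eventually (eventually_lt_nhds hβ)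
  obtain ⟨t0, ht0⟩ := this.exists
  refine ⟨t0, fun t ht => ?_⟩
  by_contra h
  push_neg at h
  exact absurd (le_trans ht (cdf_mono P Z h.le)) (not_le.mpr ht0)

lemma VaR_mem (hZ : Measurable Z)
    (hc : Continuous fun t => (P {ω | Z ω ≤ t}).toReal)
    {β : ℝ} (hβ : β ∈ Set.Ioo (0:ℝ) 1) :
    β ≤ (P {ω | Z ω ≤ VaR β P Z}).toReal := by
  have hclosed : IsClosed {t : ℝ | β ≤ (P {ω | Z ω ≤ t}).toReal} :=
    isClosed_le continuous_const hc
  exact hclosed.csInf_mem (VaR_set_nonempty P Z hZ hβ.2) (VaR_set_bddBelow P Z hZ hβ.1)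

lemma VaR_le (hZ : Measurable Z) {β t : ℝ} (hβ : 0 < β)
    (ht : β ≤ (P {ω | Z ω ≤ t}).toReal) : VaR β P Z ≤ t :=
  csInf_le (VaR_set_bddBelow P Z hZ hβ) ht

lemma toReal_union_le {A B C : Set Ω} (h : A ⊆ B ∪ C) :
    (P A).toReal ≤ (P B).toReal + (P C).toReal := by
  have h1 : P A ≤ P B + P C := le_trans (measure_mono h) (measure_union_le B C)
  have := ENNReal.toReal_mono (by finiteness) h1
  rwa [ENNReal.toReal_add (measure_ne_top _ _) (measure_ne_top _ _)] at this

end Aux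

/-- If the CDFs of `X` and `X + Y` are continuous and strictly increasing, `α ∈ (0,1)`,
`ε ∈ (0, min α (1−α))`, `δ > 0` and `P(|Y| > δ) < ε`, then
`VaR^{α−ε}(X) − δ ≤ VaR^α(X+Y) ≤ VaR^{α+ε}(X) + δ`. -/
theorem VaR_add_perturbation_bounds
    {Ω : Type*} [MeasurableSpace Ω]
    (P : Measure Ω) [IsProbabilityMeasure P]
    (X Y : Ω → ℝ) (hX : Measurable X) (hY : Measurable Y)
    (hXcdf_cont : Continuous fun t => (P {ω | X ω ≤ t}).toReal)
    (hXcdf_mono : StrictMono fun t => (P {ω | X ω ≤ t}).toReal)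
    (hXYcdf_cont : Continuous fun t => (P {ω | X ω + Y ω ≤ t}).toReal)
    (hXYcdf_mono : StrictMono fun t => (P {ω | X ω + Y ω ≤ t}).toReal)
    (α ε δ : ℝ) (hα : α ∈ Set.Ioo (0 : ℝ) 1)
    (hε : ε ∈ Set.Ioo (0 : ℝ) (min α (1 - α))) (hδ : 0 < δ)
    (hYδ : (P {ω | δ < |Y ω|}).toReal < ε) :
    VaR (α - ε) P X - δ ≤ VaR α P (fun ω => X ω + Y ω) ∧
      VaR α P (fun ω => X ω + Y ω) ≤ VaR (α + ε) P X + δ := by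
  obtain ⟨hα0, hα1⟩ := hα
  obtain ⟨hε0, hεm⟩ := hε
  have hεα : ε < α := lt_of_lt_of_le hεm (min_le_left _ _)
  have hεα' : ε < 1 - α := lt_of_lt_of_le hεm (min_le_right _ _)
  have hXY : Measurable fun ω => X ω + Y ω := hX.add hY
  -- key containments
  have key1 : ∀ t : ℝ, (P {ω | X ω + Y ω ≤ t}).toReal ≤
      (P {ω | X ω ≤ t + δ}).toReal + (P {ω | δ < |Y ω|}).toReal := by
    intro t
    apply toReal_union_le
    intro ω hω
    rcases le_or_gt |Y ω| δ with h | h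
    · left
      have := abs_le.mp h
      simp only [Set.mem_setOf_eq] at hω ⊢
      linarith [this.1]
    · right; exact h
  have key2 : ∀ t : ℝ, (P {ω | X ω ≤ t}).toReal ≤
      (P {ω | X ω + Y ω ≤ t + δ}).toReal + (P {ω | δ < |Y ω|}).toReal := by
    intro t
    apply toReal_union_le
    intro ω hω
    rcases le_or_gt |Y ω| δ with h | h
    · left
      have := abs_le.mp h
      simp only [Set.mem_setOf_eq] at hω ⊢
      linarith [this.2]
    · right; exact h
  constructor
  · -- lower bound
    set u := VaR α P (fun ω => X ω + Y ω) with hu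
    have hmem : α ≤ (P {ω | X ω + Y ω ≤ u}).toReal :=
      VaR_mem P _ hXY hXYcdf_cont ⟨hα0, hα1⟩
    have : α - ε ≤ (P {ω | X ω ≤ u + δ}).toReal := by
      have := key1 u
      linarith
    have := VaR_le P X hX (by linarith : (0:ℝ) < α - ε) this
    linarith
  · -- upper bound
    set s := VaR (α + ε) P X with hs
    have hmem : α + ε ≤ (P {ω | X ω ≤ s}).toReal :=
      VaR_mem P X hX hXcdf_cont ⟨by linarith, by linarith⟩
    have : α ≤ (P {ω | X ω + Y ω ≤ s + δ}).toReal := by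
      have := key2 s
      linarith
    have := VaR_le P _ hXY hα0 this
    linarith
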